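/- Let ν₀ > 1, let X be distributed according to DPareto(ν₀), and let ℓ : ℕ → ℝ satisfy E[ ℓ(X) ] = 0 and E[ ℓ(X)^2 ] < ∞. Define a(s) = E[ ∂_ν g_{ν₀}(X,s) ], ψ(x,s) = g_{ν₀}(x,s) + a(s) ℓ(x), and k(x,y) = ∫_0^1 ψ(x,s) ψ(y,s) ds. Then E[ ψ(X,s) ] = 0 for every s ∈ (0,1), and consequently E[ k(x, X) ] = 0 for every x ∈ ℕ; that is, k is degenerate of order 1 under DPareto(ν₀). -/

import Mathlib

open MeasureTheory Real Filter Set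
open Topology

noncomputable def zetaR (ν : ℝ) : ℝ := ∑' k : ℕ, ((k : ℝ) + 1) ^ (-ν)

noncomputable def dpPMF (ν : ℝ) (k : ℕ) : ℝ := (k : ℝ) ^ (-ν) / zetaR ν

noncomputable def g (ν : ℝ) (x : ℕ) (s : ℝ) : ℝ :=
  s ^ (x - 1) - 1 + ((x : ℝ) / ((x : ℝ) + 1)) ^ ν * (1 - s ^ x)

noncomputable def hker (ν : ℝ) (x y : ℕ) : ℝ :=
  ∫ s in (0:ℝ)..1, g ν x s * g ν y s

def IsDPareto {Ω : Type*} [MeasurableSpace Ω] (P : Measure Ω) (X : Ω → ℕ) (ν : ℝ) : Prop :=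
  ∀ k : ℕ, 1 ≤ k → P (X ⁻¹' {k}) = ENNReal.ofReal (dpPMF ν k)

/-! ### Auxiliary lemmas -/

lemma aux_nat_rpow_summable {ν : ℝ} (hν : 1 < ν) :
    Summable (fun n : ℕ => (n : ℝ) ^ (-ν)) :=
  Real.summable_nat_rpow.mpr (by linarith)

lemma aux_zetaR_pos {ν : ℝ} (hν : 1 < ν) : 0 < zetaR ν := by
  have hs : Summable (fun k : ℕ => ((k : ℝ) + 1) ^ (-ν)) := by
    have := (summable_nat_add_iff 1).mpr (aux_nat_rpow_summable hν)
    refine this.congr fun n => ?_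
    push_cast; ring_nf
  have h1 : (1:ℝ) ≤ zetaR ν := by
    have := Summable.le_tsum hs 0 (fun i _ => Real.rpow_nonneg (by positivity) _)
    simpa [zetaR] using this
  linarith

lemma aux_dpPMF_nonneg {ν : ℝ} (hν : 1 < ν) (j : ℕ) : 0 ≤ dpPMF ν j :=
  div_nonneg (Real.rpow_nonneg (Nat.cast_nonneg j) _) (aux_zetaR_pos hν).le

lemma aux_dpPMF_summable {ν : ℝ} (hν : 1 < ν) : Summable (dpPMF ν) :=
  (aux_nat_rpow_summable hν).div_const (zetaR ν)

lemma aux_dpPMF_zero {ν : ℝ} (hν : 1 < ν) : dpPMF ν 0 = 0 := by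
  simp [dpPMF, Real.zero_rpow (by intro h; simp at h; linarith : -ν ≠ 0)]

lemma aux_g_abs_le {ν : ℝ} (hν : 1 < ν) {s : ℝ} (hs : s ∈ Ioc (0:ℝ) 1) (j : ℕ) :
    |g ν j s| ≤ 2 := by
  obtain ⟨hs0, hs1⟩ := hs
  have h1 : 0 < s ^ (j - 1) := pow_pos hs0 _
  have h2 : s ^ (j - 1) ≤ 1 := pow_le_one₀ hs0.le hs1
  have h3 : 0 < s ^ j := pow_pos hs0 _
  have h4 : s ^ j ≤ 1 := pow_le_one₀ hs0.le hs1
  have hc0 : (0:ℝ) ≤ ((j : ℝ) / ((j : ℝ) + 1)) ^ ν := Real.rpow_nonneg (by positivity) _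
  have hc1 : ((j : ℝ) / ((j : ℝ) + 1)) ^ ν ≤ 1 :=
    Real.rpow_le_one (by positivity) (by
      rw [div_le_one (by positivity)]; linarith) (by linarith)
  have hh : ((j : ℝ) / ((j : ℝ) + 1)) ^ ν * (1 - s ^ j) ≤ 1 := by nlinarith
  have hh0 : 0 ≤ ((j : ℝ) / ((j : ℝ) + 1)) ^ ν * (1 - s ^ j) := by nlinarith
  rw [abs_le]; constructor <;> simp only [g] <;> nlinarith

/-- The key telescoping identity: the expectation of `g ν ⬝ s` under the
discrete Pareto weights vanishes. -/
lemma aux_key_tsum {ν : ℝ} (hν : 1 < ν) {s : ℝ} (hs : s ∈ Ioc (0:ℝ) 1) :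
    ∑' j, dpPMF ν j * g ν j s = 0 := by
  have hζ : 0 < zetaR ν := aux_zetaR_pos hν
  obtain ⟨hs0, hs1⟩ := hs
  set u : ℕ → ℝ := fun j => ((j : ℝ) ^ (-ν) / zetaR ν) * (s ^ (j - 1) - 1) with hu
  have hterm : ∀ j : ℕ, dpPMF ν j * g ν j s = u j - u (j + 1) := by
    intro j
    match j with
    | 0 =>
      have h0 : (0:ℝ) ^ (-ν) = 0 := Real.zero_rpow (by intro h; simp at h; linarith)
      simp [dpPMF, u, h0]
    | (m+1) =>
      have hm : (0:ℝ) < (m:ℝ) + 1 := by positivity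
      have hm1 : (0:ℝ) < (m:ℝ) + 1 + 1 := by positivity
      have hkey : ((m:ℝ)+1) ^ (-ν) * ((((m:ℝ)+1) / (((m:ℝ)+1) + 1)) ^ ν)
          = (((m:ℝ)+1)+1) ^ (-ν) := by
        rw [Real.div_rpow hm.le hm1.le, Real.rpow_neg hm.le, Real.rpow_neg hm1.le]
        have h1 : ((m:ℝ)+1) ^ ν ≠ 0 := (Real.rpow_pos_of_pos hm _).ne'
        field_simp
      have e1 : ((m+1 : ℕ) : ℝ) = (m:ℝ) + 1 := by push_cast; ring
      have e2 : ((m+1+1 : ℕ) : ℝ) = (m:ℝ) + 1 + 1 := by push_cast; ring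
      have e3 : (m + 1) - 1 = m := by omega
      have e4 : (m + 1 + 1) - 1 = m + 1 := by omega
      simp only [dpPMF, g, u, e1, e2, e3, e4]
      rw [div_mul_eq_mul_div, ← hkey]
      ring
  have hsum : Summable (fun j => dpPMF ν j * g ν j s) := by
    refine Summable.of_norm (Summable.of_nonneg_of_le (fun j => norm_nonneg _)
      (fun j => ?_) ((aux_dpPMF_summable hν).mul_right 2))
    rw [norm_mul, Real.norm_of_nonneg (aux_dpPMF_nonneg hν j)]
    exact mul_le_mul_of_nonneg_left ((Real.norm_eq_abs _) ▸ aux_g_abs_le hν ⟨hs0, hs1⟩ j)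
      (aux_dpPMF_nonneg hν j)
  have hu0 : u 0 = 0 := by
    simp [u, Real.zero_rpow (by intro h; simp at h; linarith : -ν ≠ 0)]
  have hulim : Tendsto u atTop (𝓝 0) := by
    have hb : Tendsto (fun n : ℕ => (n : ℝ) ^ (-ν) / zetaR ν) atTop (𝓝 0) := by
      have h1 : Tendsto (fun x : ℝ => x ^ (-ν)) atTop (𝓝 0) :=
        tendsto_rpow_neg_atTop (by linarith)
      have h2 : Tendsto (fun n : ℕ => (n : ℝ) ^ (-ν)) atTop (𝓝 0) :=
        h1.comp tendsto_natCast_atTop_atTop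
      simpa using h2.div_const (zetaR ν)
    refine squeeze_zero_norm (fun n => ?_) hb
    have h2 : s ^ (n - 1) ≤ 1 := pow_le_one₀ hs0.le hs1
    have h1 : 0 < s ^ (n - 1) := pow_pos hs0 _
    rw [hu, norm_mul, Real.norm_of_nonneg (by positivity : (0:ℝ) ≤ (n : ℝ) ^ (-ν) / zetaR ν)]
    have hle : ‖s ^ (n - 1) - 1‖ ≤ 1 := by
      rw [Real.norm_eq_abs, abs_le]; constructor <;> linarith
    calc (n : ℝ) ^ (-ν) / zetaR ν * ‖s ^ (n - 1) - 1‖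
        ≤ (n : ℝ) ^ (-ν) / zetaR ν * 1 := mul_le_mul_of_nonneg_left hle (by positivity)
      _ = (n : ℝ) ^ (-ν) / zetaR ν := by ring
  have hpartial : Tendsto (fun n => ∑ i ∈ Finset.range n, dpPMF ν i * g ν i s)
      atTop (𝓝 0) := by
    have he : (fun n => ∑ i ∈ Finset.range n, dpPMF ν i * g ν i s)
        = fun n => u 0 - u n := by
      funext n
      rw [← Finset.sum_range_sub' u n]
      exact Finset.sum_congr rfl fun i _ => hterm i
    rw [he, hu0]
    simpa using (tendsto_const_nhds (x := (0:ℝ))).sub hulim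
  exact tendsto_nhds_unique hsum.hasSum.tendsto_sum_nat hpartial

/-- Expectations of functions of a DPareto random variable are pmf-weighted sums. -/
lemma aux_expectation {Ω : Type*} [MeasurableSpace Ω] (P : Measure Ω) [IsProbabilityMeasure P]
    (X : Ω → ℕ) (hXm : Measurable X) (hX1 : ∀ ω, 1 ≤ X ω)
    {ν₀ : ℝ} (hν₀ : 1 < ν₀) (hdist : IsDPareto P X ν₀)
    (f : ℕ → ℝ) (hf : Integrable (fun ω => f (X ω)) P) :
    (∫ ω, f (X ω) ∂P) = ∑' j, dpPMF ν₀ j * f j ∧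
      Summable (fun j => dpPMF ν₀ j * f j) := by
  have hpn := aux_dpPMF_nonneg hν₀
  have hmap : ∀ j : ℕ, (P.map X) {j} = ENNReal.ofReal (dpPMF ν₀ j) := by
    intro j
    rw [Measure.map_apply hXm (measurableSet_singleton j)]
    match j with
    | 0 =>
      have he : X ⁻¹' {0} = ∅ := by
        ext ω; simp only [mem_preimage, mem_singleton_iff, mem_empty_iff_false, iff_false]
        exact fun h => by have := hX1 ω; omega
      rw [he, aux_dpPMF_zero hν₀]
      simp
    | (j+1) => exact hdist (j+1) (Nat.succ_le_succ (Nat.zero_le _))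
  have hfmeas : Measurable f := measurable_of_countable f
  have hfi : Integrable f (P.map X) := by
    rw [integrable_map_measure hfmeas.aestronglyMeasurable hXm.aemeasurable]
    exact hf
  have heq : (∫ ω, f (X ω) ∂P) = ∑' j, dpPMF ν₀ j * f j := by
    rw [← integral_map hXm.aemeasurable hfmeas.aestronglyMeasurable,
      integral_countable' hfi]
    refine tsum_congr fun j => ?_
    rw [measureReal_def, hmap j, ENNReal.toReal_ofReal (hpn j), smul_eq_mul]
  refine ⟨heq, ?_⟩
  have hlt : ∫⁻ a, ‖f a‖₊ ∂(P.map X) ≠ ⊤ := hfi.2.ne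
  rw [lintegral_countable'] at hlt
  have hsum := ENNReal.summable_toReal hlt
  apply Summable.of_norm
  refine hsum.congr fun j => ?_
  rw [ENNReal.toReal_mul, hmap j, ENNReal.toReal_ofReal (hpn j)]
  rw [norm_mul, Real.norm_of_nonneg (hpn j)]
  simp [mul_comm]

theorem k_kernel_degenerate
    {Ω : Type*} [MeasurableSpace Ω] (P : Measure Ω) [IsProbabilityMeasure P]
    (X : Ω → ℕ) (hXm : Measurable X) (hX1 : ∀ ω, 1 ≤ X ω)
    (ν₀ : ℝ) (hν₀ : 1 < ν₀) (hdist : IsDPareto P X ν₀)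
    (ℓ : ℕ → ℝ) (hℓ1 : Integrable (fun ω => ℓ (X ω)) P)
    (hℓ0 : (∫ ω, ℓ (X ω) ∂P) = 0)
    (hℓ2 : Integrable (fun ω => (ℓ (X ω)) ^ 2) P)
    (a : ℝ → ℝ)
    (ha : ∀ s : ℝ, a s = ∫ ω, ((X ω : ℝ) / ((X ω : ℝ) + 1)) ^ ν₀ *
        Real.log ((X ω : ℝ) / ((X ω : ℝ) + 1)) * (1 - s ^ (X ω)) ∂P)
    (ψ : ℕ → ℝ → ℝ) (hψ : ∀ x s, ψ x s = g ν₀ x s + a s * ℓ x)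
    (k : ℕ → ℕ → ℝ) (hk : ∀ x y, k x y = ∫ s in (0:ℝ)..1, ψ x s * ψ y s) :
    (∀ s ∈ Set.Ioo (0:ℝ) 1, (∫ ω, ψ (X ω) s ∂P) = 0) ∧
    ∀ x : ℕ, 1 ≤ x → (∫ ω, k x (X ω) ∂P) = 0 := by
  have hpn := aux_dpPMF_nonneg hν₀
  -- the coefficient function in the definition of `a`
  set c : ℕ → ℝ := fun j => ((j : ℝ) / ((j : ℝ) + 1)) ^ ν₀ *
      Real.log ((j : ℝ) / ((j : ℝ) + 1)) with hc
  have ha' : ∀ s : ℝ, a s = ∫ ω, c (X ω) * (1 - s ^ (X ω)) ∂P := by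
    intro s
    exact ha s
  -- bounds on c
  have hc_nonpos : ∀ j, c j ≤ 0 := by
    intro j
    apply mul_nonpos_of_nonneg_of_nonpos (Real.rpow_nonneg (by positivity) _)
    apply Real.log_nonpos (by positivity)
    rw [div_le_one (by positivity)]; linarith
  have hc_abs : ∀ j : ℕ, 1 ≤ j → |c j| ≤ 1 := by
    intro j hj
    have hj0 : (0:ℝ) < (j:ℝ) := by exact_mod_cast hj
    have h1 : |((j : ℝ) / ((j : ℝ) + 1)) ^ ν₀| ≤ 1 := by
      rw [abs_of_nonneg (Real.rpow_nonneg (by positivity) _)]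
      exact Real.rpow_le_one (by positivity)
        (by rw [div_le_one (by positivity)]; linarith) (by linarith)
    have h2 : |Real.log ((j : ℝ) / ((j : ℝ) + 1))| ≤ 1 := by
      rw [abs_of_nonpos (Real.log_nonpos (by positivity)
        (by rw [div_le_one (by positivity)]; linarith)), ← Real.log_inv]
      have hinv : ((j : ℝ) / ((j : ℝ) + 1))⁻¹ = ((j:ℝ)+1)/(j:ℝ) := by
        rw [inv_div]
      rw [hinv]
      have hle2 : ((j:ℝ)+1)/(j:ℝ) ≤ 2 := by
        rw [div_le_iff₀ hj0]
        have : (1:ℝ) ≤ (j:ℝ) := by exact_mod_cast hj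
        linarith
      calc Real.log (((j:ℝ)+1)/(j:ℝ)) ≤ Real.log 2 :=
            Real.log_le_log (by positivity) hle2
        _ ≤ 1 := by
            have := Real.log_two_lt_d9
            linarith
    calc |c j| = |((j : ℝ) / ((j : ℝ) + 1)) ^ ν₀| * |Real.log ((j : ℝ) / ((j : ℝ) + 1))| :=
          abs_mul _ _
      _ ≤ 1 * 1 := mul_le_mul h1 h2 (abs_nonneg _) zero_le_one
      _ = 1 := one_mul 1
  -- the integrand defining a is bounded and integrable for s ∈ [0,1]
  have hs_pow : ∀ (s : ℝ), s ∈ Icc (0:ℝ) 1 → ∀ j : ℕ, |1 - s ^ j| ≤ 1 := by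
    intro s hs j
    have h1 : 0 ≤ s ^ j := pow_nonneg hs.1 _
    have h2 : s ^ j ≤ 1 := pow_le_one₀ hs.1 hs.2
    rw [abs_le]; constructor <;> linarith
  have haint : ∀ s ∈ Icc (0:ℝ) 1, Integrable (fun ω => c (X ω) * (1 - s ^ (X ω))) P := by
    intro s hs
    refine Integrable.mono' (integrable_const 1)
      (((measurable_of_countable (fun j => c j * (1 - s ^ j))).comp hXm).aestronglyMeasurable)
      (ae_of_all _ fun ω => ?_)
    rw [Real.norm_eq_abs, abs_mul]
    calc |c (X ω)| * |1 - s ^ (X ω)| ≤ 1 * 1 :=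
          mul_le_mul (hc_abs _ (hX1 ω)) (hs_pow s hs _) (abs_nonneg _) zero_le_one
      _ = 1 := one_mul 1
  have ha_bound : ∀ s ∈ Icc (0:ℝ) 1, |a s| ≤ 1 := by
    intro s hs
    rw [ha' s, ← Real.norm_eq_abs]
    calc ‖∫ ω, c (X ω) * (1 - s ^ (X ω)) ∂P‖
        ≤ 1 * (P univ).toReal := by
          refine norm_integral_le_of_norm_le_const (ae_of_all _ fun ω => ?_)
          rw [Real.norm_eq_abs, abs_mul]
          calc |c (X ω)| * |1 - s ^ (X ω)| ≤ 1 * 1 :=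
                mul_le_mul (hc_abs _ (hX1 ω)) (hs_pow s hs _) (abs_nonneg _) zero_le_one
            _ = 1 := one_mul 1
      _ = 1 := by simp
  -- a is monotone on [0,1], hence a.e. measurable on (0,1]
  have ha_mono : MonotoneOn a (Icc (0:ℝ) 1) := by
    intro s hsm t htm hst
    rw [ha' s, ha' t]
    refine integral_mono (haint s hsm) (haint t htm) fun ω => ?_
    have hpow : s ^ (X ω) ≤ t ^ (X ω) := pow_le_pow_left₀ hsm.1 hst _
    have := hc_nonpos (X ω)
    simp only
    nlinarith
  have ha_meas : AEMeasurable a (volume.restrict (Ioc (0:ℝ) 1)) :=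
    aemeasurable_restrict_of_monotoneOn measurableSet_Ioc
      (ha_mono.mono Ioc_subset_Icc_self)
  -- measurability of ψ in s
  have hgmeas : ∀ j : ℕ, Continuous (fun s : ℝ => g ν₀ j s) := by
    intro j
    unfold g
    fun_prop
  have hψmeas : ∀ j : ℕ, AEMeasurable (fun s => ψ j s) (volume.restrict (Ioc (0:ℝ) 1)) := by
    intro j
    have : (fun s => ψ j s) = fun s => g ν₀ j s + a s * ℓ j := by
      funext s; rw [hψ]
    rw [this]
    exact ((hgmeas j).measurable.aemeasurable).add (ha_meas.mul_const _)
  -- bound on ψ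
  have hψ_bound : ∀ (j : ℕ) (s : ℝ), s ∈ Ioc (0:ℝ) 1 → |ψ j s| ≤ 2 + |ℓ j| := by
    intro j s hs
    rw [hψ]
    calc |g ν₀ j s + a s * ℓ j| ≤ |g ν₀ j s| + |a s * ℓ j| := abs_add_le _ _
      _ ≤ 2 + |ℓ j| := by
          have h1 := aux_g_abs_le hν₀ hs j
          have h2 : |a s * ℓ j| ≤ 1 * |ℓ j| := by
            rw [abs_mul]
            exact mul_le_mul_of_nonneg_right
              (ha_bound s (Ioc_subset_Icc_self hs)) (abs_nonneg _)
          linarith [abs_nonneg (ℓ j)]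
  -- integrability of ψ (X ⬝) s
  have hψint : ∀ s ∈ Ioc (0:ℝ) 1, Integrable (fun ω => ψ (X ω) s) P := by
    intro s hs
    have : (fun ω => ψ (X ω) s) = fun ω => g ν₀ (X ω) s + a s * ℓ (X ω) := by
      funext ω; rw [hψ]
    rw [this]
    refine Integrable.add ?_ (hℓ1.const_mul _)
    refine Integrable.mono' (integrable_const 2)
      (((measurable_of_countable (fun j => g ν₀ j s)).comp hXm).aestronglyMeasurable)
      (ae_of_all _ fun ω => ?_)
    rw [Real.norm_eq_abs]
    exact aux_g_abs_le hν₀ hs _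
  -- Part 1 (on Ioc)
  have hpart1 : ∀ s ∈ Ioc (0:ℝ) 1, (∫ ω, ψ (X ω) s ∂P) = 0 := by
    intro s hs
    obtain ⟨heq, hsumψ⟩ := aux_expectation P X hXm hX1 hν₀ hdist (fun j => ψ j s) (hψint s hs)
    rw [heq]
    obtain ⟨heqℓ, hsumℓ⟩ := aux_expectation P X hXm hX1 hν₀ hdist ℓ hℓ1
    have hsumg : Summable (fun j => dpPMF ν₀ j * g ν₀ j s) := by
      refine Summable.of_norm (Summable.of_nonneg_of_le (fun j => norm_nonneg _)
        (fun j => ?_) ((aux_dpPMF_summable hν₀).mul_right 2))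
      rw [norm_mul, Real.norm_of_nonneg (hpn j)]
      exact mul_le_mul_of_nonneg_left ((Real.norm_eq_abs _) ▸ aux_g_abs_le hν₀ hs j) (hpn j)
    have hterm : ∀ j, dpPMF ν₀ j * ψ j s
        = dpPMF ν₀ j * g ν₀ j s + a s * (dpPMF ν₀ j * ℓ j) := by
      intro j; rw [hψ]; ring
    calc ∑' j, dpPMF ν₀ j * ψ j s
        = ∑' j, (dpPMF ν₀ j * g ν₀ j s + a s * (dpPMF ν₀ j * ℓ j)) := tsum_congr hterm
      _ = (∑' j, dpPMF ν₀ j * g ν₀ j s) + ∑' j, a s * (dpPMF ν₀ j * ℓ j) :=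
          Summable.tsum_add hsumg (hsumℓ.mul_left _)
      _ = 0 + a s * ∑' j, dpPMF ν₀ j * ℓ j := by
          rw [aux_key_tsum hν₀ hs, tsum_mul_left]
      _ = 0 := by rw [← heqℓ, hℓ0]; ring
  refine ⟨fun s hs => hpart1 s (Ioo_subset_Ioc_self hs), ?_⟩
  -- Part 2
  intro x hx
  -- rewrite k as a set integral over Ioc 0 1
  have hkIoc : ∀ y : ℕ, k x y = ∫ s in Ioc (0:ℝ) 1, ψ x s * ψ y s := by
    intro y
    rw [hk, intervalIntegral.integral_of_le zero_le_one]
  -- bound on k x j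
  have hkb : ∀ j : ℕ, |k x j| ≤ (2 + |ℓ x|) * (2 + |ℓ j|) := by
    intro j
    rw [hk, ← Real.norm_eq_abs]
    calc ‖∫ s in (0:ℝ)..1, ψ x s * ψ j s‖
        ≤ (2 + |ℓ x|) * (2 + |ℓ j|) * |1 - 0| := by
          refine intervalIntegral.norm_integral_le_of_norm_le_const fun s hs => ?_
          rw [uIoc_of_le zero_le_one] at hs
          rw [Real.norm_eq_abs, abs_mul]
          exact mul_le_mul (hψ_bound x s hs) (hψ_bound j s hs) (abs_nonneg _)
            (by positivity)
      _ = (2 + |ℓ x|) * (2 + |ℓ j|) := by norm_num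
  -- integrability of k x (X ⬝)
  have hkint : Integrable (fun ω => k x (X ω)) P := by
    refine Integrable.mono'
      (((integrable_const ((2 + |ℓ x|) * 2)).add
        ((hℓ1.abs.const_mul (2 + |ℓ x|)))) )
      (((measurable_of_countable (k x)).comp hXm).aestronglyMeasurable)
      (ae_of_all _ fun ω => ?_)
    rw [Real.norm_eq_abs]
    calc |k x (X ω)| ≤ (2 + |ℓ x|) * (2 + |ℓ (X ω)|) := hkb _
      _ = (2 + |ℓ x|) * 2 + (2 + |ℓ x|) * |ℓ (X ω)| := by ring
  obtain ⟨heqk, _⟩ := aux_expectation P X hXm hX1 hν₀ hdist (k x) hkint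
  rw [heqk]
  -- summability of the bounding series
  obtain ⟨_, hsumabsℓ⟩ := aux_expectation P X hXm hX1 hν₀ hdist (fun j => |ℓ j|) hℓ1.abs
  have hBsum : Summable (fun j => dpPMF ν₀ j * ((2 + |ℓ x|) * (2 + |ℓ j|))) := by
    have h1 : Summable (fun j => dpPMF ν₀ j * (2 + |ℓ j|)) := by
      have := ((aux_dpPMF_summable hν₀).mul_right 2).add hsumabsℓ
      refine this.congr fun j => ?_
      ring
    have := h1.mul_left (2 + |ℓ x|)
    refine this.congr fun j => ?_
    ring
  have hBnonneg : ∀ j, 0 ≤ dpPMF ν₀ j * ((2 + |ℓ x|) * (2 + |ℓ j|)) := by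
    intro j
    have := hpn j
    positivity
  -- the summand functions
  set F : ℕ → ℝ → ℝ := fun j s => dpPMF ν₀ j * (ψ x s * ψ j s) with hF
  have hFmeas : ∀ j, AEStronglyMeasurable (F j) (volume.restrict (Ioc (0:ℝ) 1)) := by
    intro j
    exact ((aemeasurable_const.mul ((hψmeas x).mul (hψmeas j)))).aestronglyMeasurable
  have hFlint : ∀ j, ∫⁻ s in Ioc (0:ℝ) 1, ‖F j s‖₊ ∂volume
      ≤ ENNReal.ofReal (dpPMF ν₀ j * ((2 + |ℓ x|) * (2 + |ℓ j|))) := by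
    intro j
    have hb : ∀ᵐ s ∂(volume.restrict (Ioc (0:ℝ) 1)),
        (‖F j s‖₊ : ENNReal) ≤ ENNReal.ofReal (dpPMF ν₀ j * ((2 + |ℓ x|) * (2 + |ℓ j|))) := by
      refine (ae_restrict_iff' measurableSet_Ioc).2 (ae_of_all _ fun s hs => ?_)
      rw [show ((‖F j s‖₊ : ENNReal)) = ENNReal.ofReal ‖F j s‖ from (ofReal_norm _).symm]
      apply ENNReal.ofReal_le_ofReal
      rw [hF]
      simp only [Real.norm_eq_abs, abs_mul]
      rw [abs_of_nonneg (hpn j)]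
      refine mul_le_mul_of_nonneg_left ?_ (hpn j)
      exact mul_le_mul (hψ_bound x s hs) (hψ_bound j s hs) (abs_nonneg _) (by positivity)
    calc ∫⁻ s in Ioc (0:ℝ) 1, ‖F j s‖₊ ∂volume
        ≤ ∫⁻ _ in Ioc (0:ℝ) 1, ENNReal.ofReal (dpPMF ν₀ j * ((2 + |ℓ x|) * (2 + |ℓ j|))) ∂volume :=
          lintegral_mono_ae hb
      _ = ENNReal.ofReal (dpPMF ν₀ j * ((2 + |ℓ x|) * (2 + |ℓ j|)))
            * volume (Ioc (0:ℝ) 1) := by rw [lintegral_const, Measure.restrict_apply_univ]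
      _ = ENNReal.ofReal (dpPMF ν₀ j * ((2 + |ℓ x|) * (2 + |ℓ j|))) := by
          simp [Real.volume_Ioc]
  have hFsum : ∑' j, ∫⁻ s in Ioc (0:ℝ) 1, ‖F j s‖₊ ∂volume ≠ ⊤ := by
    have hle : ∑' j, ∫⁻ s in Ioc (0:ℝ) 1, ‖F j s‖₊ ∂volume
        ≤ ∑' j, ENNReal.ofReal (dpPMF ν₀ j * ((2 + |ℓ x|) * (2 + |ℓ j|))) :=
      ENNReal.tsum_le_tsum hFlint
    have heqo : ∑' j, ENNReal.ofReal (dpPMF ν₀ j * ((2 + |ℓ x|) * (2 + |ℓ j|)))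
        = ENNReal.ofReal (∑' j, dpPMF ν₀ j * ((2 + |ℓ x|) * (2 + |ℓ j|))) :=
      (ENNReal.ofReal_tsum_of_nonneg hBnonneg hBsum).symm
    rw [heqo] at hle
    exact (lt_of_le_of_lt hle ENNReal.ofReal_lt_top).ne
  -- interchange sum and integral
  have hswap : ∑' j, dpPMF ν₀ j * k x j = ∫ s in Ioc (0:ℝ) 1, ∑' j, F j s := by
    rw [integral_tsum hFmeas hFsum]
    refine tsum_congr fun j => ?_
    rw [hkIoc j, hF]
    simp only
    rw [integral_const_mul]
  rw [hswap]
  -- the inner sum vanishes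
  have hinner : ∀ s ∈ Ioc (0:ℝ) 1, ∑' j, F j s = 0 := by
    intro s hs
    obtain ⟨heqψ, hsumψ⟩ := aux_expectation P X hXm hX1 hν₀ hdist (fun j => ψ j s) (hψint s hs)
    have : ∑' j, F j s = ψ x s * ∑' j, dpPMF ν₀ j * ψ j s := by
      rw [← tsum_mul_left]
      refine tsum_congr fun j => ?_
      rw [hF]; ring
    rw [this, ← heqψ, hpart1 s hs, mul_zero]
  calc ∫ s in Ioc (0:ℝ) 1, ∑' j, F j s
      = ∫ s in Ioc (0:ℝ) 1, (0:ℝ) := by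
        refine setIntegral_congr_fun measurableSet_Ioc fun s hs => hinner s hs
    _ = 0 := by simp
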